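/- arXiv:0905.2778 — 2 statements merged into one kernel-verified Lean document; each statement's English description precedes it below -/
import Mathlib

section
/- Let X be a compact metric space and φ : X → X a CSLI map. Then there exists a strictly positive cocycle for φ (i.e., a cocycle ω with ω(x) > 0 for all x ∈ X) if and only if φ is a local homeomorphism. -/
/-- A map is locally injective if every point has a neighborhood on which
the map is injective. -/
def LocallyInjective {X : Type*} [TopologicalSpace X] (φ : X → X) : Prop :=
  ∀ x : X, ∃ U ∈ nhds x, Set.InjOn φ U

/-- A map of a topological space to itself is CSLI if it is continuous,
surjective and locally injective. -/
def CSLI {X : Type*} [TopologicalSpace X] (φ : X → X) : Prop :=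
  Continuous φ ∧ Function.Surjective φ ∧ LocallyInjective φ

/-- A cocycle for a map `φ : X → X` is a continuous nonnegative real function `ω`
such that the sum of `ω` over each fiber of `φ` equals `1`. -/
def IsCocycle {X : Type*} [TopologicalSpace X] (φ : X → X) (ω : X → ℝ) : Prop :=
  Continuous ω ∧ (∀ x : X, 0 ≤ ω x) ∧ ∀ y : X, ∑ᶠ x ∈ φ ⁻¹' {y}, ω x = 1

/-- `φ` is locally open at `x` if there is an open neighborhood `N` of `x` such that
the restriction of `φ` to `N` is an open map of `N` into `X`. -/
def LocallyOpenAt {X : Type*} [TopologicalSpace X] (φ : X → X) (x : X) : Prop :=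
  ∃ N : Set X, IsOpen N ∧ x ∈ N ∧ ∀ O ⊆ N, IsOpen O → IsOpen (φ '' O)

/-- Fibers of a continuous locally injective map on a compact space are finite. -/
lemma fiber_finite {X : Type*} [TopologicalSpace X] [CompactSpace X] [T1Space X]
    {φ : X → X} (hc : Continuous φ) (hli : LocallyInjective φ) (y : X) :
    (φ ⁻¹' {y}).Finite := by
  have hS : IsClosed (φ ⁻¹' {y}) := isClosed_singleton.preimage hc
  choose U hU hUinj using hli
  obtain ⟨t, -, hcov⟩ := hS.isCompact.elim_nhds_subcover U (fun p _ => hU p)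
  have h1 : ∀ p ∈ (t : Set X), (φ ⁻¹' {y} ∩ U p).Finite := by
    intro p _
    refine Set.Subsingleton.finite (fun a ha b hb => ?_)
    have : φ a = φ b := by
      have ha' : φ a = y := ha.1
      have hb' : φ b = y := hb.1
      rw [ha', hb']
    exact hUinj p ha.2 hb.2 this
  refine Set.Finite.subset (Set.Finite.biUnion t.finite_toSet h1) (fun q hq => ?_)
  obtain ⟨p, hp, hqp⟩ := Set.mem_iUnion₂.mp (hcov hq)
  exact Set.mem_iUnion₂.mpr ⟨p, hp, hq, hqp⟩

/-- Sum comparison along an injection. -/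
lemma sum_le_sum_inj {ι : Type*} {A B : Finset ι} {i : ι → ι} (hi : Set.InjOn i A)
    (hm : ∀ p ∈ A, i p ∈ B) {f g : ι → ℝ} (hfg : ∀ p ∈ A, f p ≤ g (i p))
    (hg : ∀ z ∈ B, 0 ≤ g z) : ∑ p ∈ A, f p ≤ ∑ z ∈ B, g z := by
  classical
  calc ∑ p ∈ A, f p ≤ ∑ p ∈ A, g (i p) := Finset.sum_le_sum hfg
    _ = ∑ z ∈ A.image i, g z := (Finset.sum_image (fun a ha b hb h => hi ha hb h)).symm
    _ ≤ ∑ z ∈ B, g z := Finset.sum_le_sum_of_subset_of_nonneg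
        (Finset.image_subset_iff.2 hm) (fun z hz _ => hg z hz)

set_option maxHeartbeats 1000000 in
lemma isOpenMap_of_pos_cocycle {X : Type*} [MetricSpace X] [CompactSpace X]
    {φ : X → X} (hφ : CSLI φ) {ω : X → ℝ} (hω : IsCocycle φ ω)
    (hpos : ∀ x : X, 0 < ω x) : IsOpenMap φ := by
  classical
  rw [isOpenMap_iff_nhds_le]
  intro x
  refine Filter.le_map (fun V hV => ?_)
  obtain ⟨U, hU, hUinj⟩ := hφ.2.2 x
  obtain ⟨O, hOU, hOopen, hxO⟩ := mem_nhds_iff.mp (Filter.inter_mem hU hV)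
  set y := φ x with hy
  have hF : (φ ⁻¹' {y}).Finite := fiber_finite hφ.1 hφ.2.2 y
  set A0 : Finset X := hF.toFinset with hA0
  have hxA0 : x ∈ A0 := by
    rw [hA0, Set.Finite.mem_toFinset]; exact rfl
  set B : Finset X := A0.erase x with hB
  obtain ⟨n, hn⟩ : ∃ n : ℕ, n = B.card := ⟨_, rfl⟩
  set ε : ℝ := ω x / (2 * (n + 1)) with hε
  have hωx : 0 < ω x := hpos x
  have hεpos : 0 < ε := by positivity
  have hVz : ∀ z : X, ∃ Vz : Set X, IsOpen Vz ∧ z ∈ Vz ∧ Set.InjOn φ Vz ∧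
      ∀ p ∈ Vz, ω p < ω z + ε := by
    intro z
    obtain ⟨Uz, hUz, hUzinj⟩ := hφ.2.2 z
    have h1 : ω ⁻¹' (Set.Iio (ω z + ε)) ∈ nhds z :=
      hω.1.continuousAt.preimage_mem_nhds (Iio_mem_nhds (by linarith))
    refine ⟨interior (Uz ∩ ω ⁻¹' (Set.Iio (ω z + ε))), isOpen_interior,
      mem_interior_iff_mem_nhds.2 (Filter.inter_mem hUz h1),
      hUzinj.mono (fun p hp => (interior_subset hp).1), fun p hp => (interior_subset hp).2⟩
  choose Vz hVzopen hVzmem hVzinj hVzlt using hVz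
  set G : Set X := O ∪ ⋃ z ∈ B, Vz z with hG
  have hGopen : IsOpen G := hOopen.union (isOpen_biUnion fun z _ => hVzopen z)
  have hKc : IsClosed (φ '' Gᶜ) := (hGopen.isClosed_compl.isCompact.image hφ.1).isClosed
  have hyW : y ∈ (φ '' Gᶜ)ᶜ := by
    rintro ⟨p, hpK, hpy⟩
    by_cases hpx : p = x
    · exact hpK (Or.inl (hpx ▸ hxO))
    · have hpB : p ∈ B := Finset.mem_erase.2 ⟨hpx, by rw [hA0, Set.Finite.mem_toFinset]; exact hpy⟩
      exact hpK (Or.inr (Set.mem_biUnion hpB (hVzmem p)))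
  have hsub : (φ '' Gᶜ)ᶜ ⊆ φ '' V := by
    intro y' hy'
    by_contra hno
    have hF' : (φ ⁻¹' {y'}).Finite := fiber_finite hφ.1 hφ.2.2 y'
    set A : Finset X := hF'.toFinset with hA
    have hfib : ∀ p ∈ A, ∃ z ∈ B, p ∈ Vz z := by
      intro p hp
      have hpy' : φ p = y' := by rwa [hA, Set.Finite.mem_toFinset] at hp
      have hpG : p ∈ G := by
        by_contra hpG
        exact hy' ⟨p, hpG, hpy'⟩
      rcases hpG with hpO | h
      · exact absurd ⟨p, (hOU hpO).2, hpy'⟩ hno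
      · obtain ⟨z, hz, hzp⟩ := Set.mem_iUnion₂.mp h
        exact ⟨z, hz, hzp⟩
    choose! i hiB hiV using hfib
    have hφA : ∀ p ∈ A, φ p = y' := fun p hp => by rwa [hA, Set.Finite.mem_toFinset] at hp
    have key : (1:ℝ) ≤ ∑ z ∈ B, (ω z + ε) := by
      have h1 : ∑ᶠ p ∈ φ ⁻¹' {y'}, ω p = 1 := hω.2.2 y'
      rw [finsum_mem_eq_finite_toFinset_sum _ hF'] at h1
      rw [← h1]
      refine sum_le_sum_inj ?_ hiB (fun p hp => (hVzlt (i p) p (hiV p hp)).le)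
        (fun z _ => by linarith [(hpos z).le, hεpos.le])
      intro a ha b hb hab
      rw [Finset.mem_coe] at ha hb
      have hbV : b ∈ Vz (i a) := hab ▸ hiV b hb
      exact hVzinj (i a) (hiV a ha) hbV ((hφA a ha).trans (hφA b hb).symm)
    have hsumB : ∑ z ∈ B, ω z = 1 - ω x := by
      have h2 : ∑ z ∈ A0, ω z = 1 := by
        rw [hA0, ← finsum_mem_eq_finite_toFinset_sum _ hF]; exact hω.2.2 y
      have h3 := Finset.add_sum_erase A0 ω hxA0
      rw [← hB] at h3
      linarith [h3.trans h2]
    have hcard : ((n:ℝ)) * ε < ω x := by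
      have hd : (0:ℝ) < 2 * ((n : ℝ) + 1) := by positivity
      have h2 : ω x = 2 * ((n:ℝ) + 1) * ε := by
        rw [hε]; field_simp
      have hc : (0:ℝ) ≤ (n : ℝ) := Nat.cast_nonneg _
      nlinarith [hεpos]
    rw [Finset.sum_add_distrib, Finset.sum_const, ← hn, nsmul_eq_mul] at key
    linarith
  exact Filter.mem_of_superset (hKc.isOpen_compl.mem_nhds hyW) hsub

lemma card_fiber_locally_const {X : Type*} [MetricSpace X] [CompactSpace X]
    {φ : X → X} (hφ : CSLI φ) (hloc : IsLocalHomeomorph φ) (y : X) :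
    ∃ W ∈ nhds y, IsOpen W ∧ ∀ y' ∈ W,
      Nat.card (φ ⁻¹' {y'}) = Nat.card (φ ⁻¹' {y}) := by
  classical
  have hF : (φ ⁻¹' {y}).Finite := fiber_finite hφ.1 hφ.2.2 y
  obtain ⟨U, hU, hUdisj⟩ := hF.t2_separation
  choose e hes heφ using (fun x => hloc x)
  set V : X → Set X := fun x => U x ∩ (e x).source with hV
  have hVopen : ∀ x, IsOpen (V x) := fun x => (hU x).2.inter (e x).open_source
  have hVmem : ∀ x, x ∈ V x := fun x => ⟨(hU x).1, hes x⟩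
  have hVinj : ∀ x, Set.InjOn φ (V x) := fun x => by
    rw [heφ x]; exact (e x).injOn.mono Set.inter_subset_right
  set G : Set X := ⋃ x ∈ φ ⁻¹' {y}, V x with hG
  have hGopen : IsOpen G := isOpen_biUnion fun x _ => hVopen x
  have hKc : IsClosed (φ '' Gᶜ) := (hGopen.isClosed_compl.isCompact.image hφ.1).isClosed
  set W : Set X := (⋂ x ∈ hF.toFinset, φ '' V x) ∩ (φ '' Gᶜ)ᶜ with hW
  have hWopen : IsOpen W := by
    refine IsOpen.inter ?_ hKc.isOpen_compl
    exact isOpen_biInter_finset fun x _ => hloc.isOpenMap _ (hVopen x)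
  have hyW : y ∈ W := by
    constructor
    · refine Set.mem_iInter₂.2 fun x hx => ?_
      exact ⟨x, hVmem x, hF.mem_toFinset.1 hx⟩
    · rintro ⟨p, hpG, hpy⟩
      exact hpG (Set.mem_biUnion hpy (hVmem p))
  refine ⟨W, hWopen.mem_nhds hyW, hWopen, ?_⟩
  intro y' hy'
  have hfib : ∀ p ∈ φ ⁻¹' {y'}, ∃ x ∈ φ ⁻¹' {y}, p ∈ V x := by
    intro p hp
    have hpG : p ∈ G := by
      by_contra h
      exact hy'.2 ⟨p, h, hp⟩
    obtain ⟨x, hx, hpx⟩ := Set.mem_iUnion₂.mp hpG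
    exact ⟨x, hx, hpx⟩
  choose! c hcF hcV using hfib
  have hbij : Function.Bijective
      (fun p : φ ⁻¹' {y'} => (⟨c p, hcF p p.2⟩ : φ ⁻¹' {y})) := by
    constructor
    · rintro ⟨p, hp⟩ ⟨q, hq⟩ h
      have h' : c p = c q := congrArg Subtype.val h
      apply Subtype.ext
      have hpV := hcV p hp
      have hqV : q ∈ V (c p) := h' ▸ hcV q hq
      refine hVinj (c p) hpV hqV ?_
      have hp' : φ p = y' := hp
      have hq' : φ q = y' := hq
      rw [hp', hq']
    · rintro ⟨x, hx⟩
      have h1 : y' ∈ φ '' V x := Set.mem_iInter₂.mp hy'.1 x (hF.mem_toFinset.2 hx)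
      obtain ⟨p, hpV, hpy'⟩ := h1
      have hp : p ∈ φ ⁻¹' {y'} := hpy'
      refine ⟨⟨p, hp⟩, ?_⟩
      apply Subtype.ext
      show c p = x
      by_contra hne
      exact (Set.disjoint_left.mp (hUdisj (hcF p hp) hx hne) (hcV p hp).1) hpV.1
  exact Nat.card_eq_of_bijective _ hbij

/-- A CSLI system admits a strictly positive cocycle if and only if the map is a
local homeomorphism. -/
theorem exists_pos_cocycle_iff_isLocalHomeomorph {X : Type*} [MetricSpace X]
    [CompactSpace X] (φ : X → X) (hφ : CSLI φ) :
    (∃ ω : X → ℝ, IsCocycle φ ω ∧ ∀ x : X, 0 < ω x) ↔ IsLocalHomeomorph φ := by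
  constructor
  · rintro ⟨ω, hω, hpos⟩
    have hopen : IsOpenMap φ := isOpenMap_of_pos_cocycle hφ hω hpos
    rw [isLocalHomeomorph_iff_isOpenEmbedding_restrict]
    intro x
    obtain ⟨U, hU, hUinj⟩ := hφ.2.2 x
    obtain ⟨O, hOU, hOopen, hxO⟩ := mem_nhds_iff.mp hU
    refine ⟨O, hOopen.mem_nhds hxO, ?_⟩
    refine Topology.IsOpenEmbedding.of_continuous_injective_isOpenMap
      (hφ.1.comp continuous_subtype_val) ?_ (hopen.restrict hOopen)
    intro a b h
    exact Subtype.ext (hUinj (hOU a.2) (hOU b.2) h)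
  · intro hloc
    have hcardpos : ∀ y : X, 0 < Nat.card (φ ⁻¹' {y}) := by
      intro y
      have hF : (φ ⁻¹' {y}).Finite := fiber_finite hφ.1 hφ.2.2 y
      obtain ⟨x0, hx0⟩ := hφ.2.1 y
      haveI := hF.to_subtype
      haveI : Nonempty (φ ⁻¹' {y}) := ⟨⟨x0, hx0⟩⟩
      exact Nat.card_pos
    refine ⟨fun p => ((Nat.card (φ ⁻¹' {φ p}) : ℝ))⁻¹, ⟨?_, ?_, ?_⟩, ?_⟩
    · rw [continuous_iff_continuousAt]
      intro p
      obtain ⟨W, hWnhds, hWopen, hWcard⟩ := card_fiber_locally_const hφ hloc (φ p)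
      refine Filter.EventuallyEq.continuousAt (y := ((Nat.card (φ ⁻¹' {φ p}) : ℝ))⁻¹) ?_
      filter_upwards [hφ.1.continuousAt.preimage_mem_nhds hWnhds] with q hq
      rw [hWcard (φ q) hq]
    · intro x; positivity
    · intro y
      have hF : (φ ⁻¹' {y}).Finite := fiber_finite hφ.1 hφ.2.2 y
      rw [finsum_mem_eq_finite_toFinset_sum _ hF]
      have hcongr : ∀ p ∈ hF.toFinset, ((Nat.card (φ ⁻¹' {φ p}) : ℝ))⁻¹
          = ((Nat.card (φ ⁻¹' {y}) : ℝ))⁻¹ := by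
        intro p hp
        have : φ p = y := hF.mem_toFinset.1 hp
        rw [this]
      rw [Finset.sum_congr rfl hcongr, Finset.sum_const, nsmul_eq_mul]
      have hcards : hF.toFinset.card = Nat.card (φ ⁻¹' {y}) := by
        rw [Nat.card_coe_set_eq, Set.ncard_eq_toFinset_card _ hF]
      rw [hcards]
      have : ((Nat.card (φ ⁻¹' {y}) : ℝ)) ≠ 0 := by
        exact_mod_cast (hcardpos y).ne'
      field_simp
    · intro x
      have := hcardpos (φ x)
      have h0 : (0:ℝ) < (Nat.card (φ ⁻¹' {φ x}) : ℝ) := by exact_mod_cast this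
      exact inv_pos.2 h0
end

section
/- Let 𝒫 be a divisible abelian semigroup acting on a compact metric space X by CSLI maps d ↦ φ_d (so φ_{d+e} = φ_d ∘ φ_e). If the family {φ_d : d ∈ 𝒫} separates the points of X (i.e., for any u ≠ v in X there exists d ∈ 𝒫 with φ_d(u) ≠ φ_d(v)), then every map φ_d, d ∈ 𝒫, is a homeomorphism of X. -/
/-- `iterAdd n p` is the `(n+1)`-fold sum `p + p + ⋯ + p`, so that every
`iterAdd n p` is a positive multiple of `p`. -/
def iterAdd {P : Type*} [AddCommSemigroup P] : ℕ → P → P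
  | 0, p => p
  | n + 1, p => p + iterAdd n p

/-- A sequence `d` in an abelian semigroup is fundamental if each `d k` is a
multiple of `d (k+1)` by an integer `> 1`, and every element of the semigroup is
a positive multiple of some `d k`. -/
def IsFundamentalSeq {P : Type*} [AddCommSemigroup P] (d : ℕ → P) : Prop :=
  (∃ n : ℕ → ℕ, ∀ k, 1 ≤ n k ∧ d k = iterAdd (n k) (d (k + 1))) ∧
    ∀ p : P, ∃ k m : ℕ, p = iterAdd m (d k)

/-- An abelian semigroup is divisible if it contains a fundamental sequence. -/
def IsDivisibleSemigroup (P : Type*) [AddCommSemigroup P] : Prop :=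
  ∃ d : ℕ → P, IsFundamentalSeq d

private lemma iterAdd_add_iterAdd {P : Type*} [AddCommSemigroup P] (a b : ℕ) (p : P) :
    iterAdd a p + iterAdd b p = iterAdd (a + b + 1) p := by
  induction a with
  | zero =>
      show p + iterAdd b p = iterAdd (0 + b + 1) p
      have : 0 + b + 1 = b + 1 := by omega
      rw [this]; rfl
  | succ n ih =>
      show (p + iterAdd n p) + iterAdd b p = iterAdd (n + 1 + b + 1) p
      rw [add_assoc, ih]
      have : n + 1 + b + 1 = (n + b + 1) + 1 := by omega
      rw [this]; rfl

private lemma iterAdd_iterAdd {P : Type*} [AddCommSemigroup P] (a b : ℕ) (p : P) :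
    iterAdd a (iterAdd b p) = iterAdd (a * b + a + b) p := by
  induction a with
  | zero =>
      show iterAdd b p = iterAdd (0 * b + 0 + b) p
      have : 0 * b + 0 + b = b := by omega
      rw [this]
  | succ n ih =>
      show iterAdd b p + iterAdd n (iterAdd b p) = iterAdd ((n + 1) * b + (n + 1) + b) p
      rw [ih, iterAdd_add_iterAdd]
      have : b + (n * b + n + b) + 1 = (n + 1) * b + (n + 1) + b := by ring
      rw [this]

/-- If a divisible abelian semigroup acts by CSLI maps on a compact metric space
and the action separates points, then every map of the action is a homeomorphism. -/
theorem homeomorph_of_separating {P : Type*} [AddCommSemigroup P]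
    (hP : IsDivisibleSemigroup P) {X : Type*} [MetricSpace X] [CompactSpace X]
    (Φ : P → X → X) (hact : ∀ d e : P, Φ (d + e) = Φ d ∘ Φ e)
    (hφ : ∀ d : P, CSLI (Φ d))
    (hsep : ∀ u v : X, u ≠ v → ∃ d : P, Φ d u ≠ Φ d v) :
    ∀ d : P, ∃ e : X ≃ₜ X, ⇑e = Φ d := by
  obtain ⟨d, ⟨⟨n, hn⟩, hgen⟩⟩ := hP
  -- Φ of an iterated sum is an iterate
  have hiter : ∀ (m : ℕ) (p : P), Φ (iterAdd m p) = (Φ p)^[m + 1] := by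
    intro m p
    induction m with
    | zero => simp [iterAdd]
    | succ k ih =>
        show Φ (p + iterAdd k p) = (Φ p)^[k + 1 + 1]
        rw [hact, ih, ← Function.iterate_succ']
  have hkey : ∀ (m : ℕ) (p : P) (x y : X), Φ p x = Φ p y →
      Φ (iterAdd m p) x = Φ (iterAdd m p) y := by
    intro m p x y h
    rw [hiter, Function.iterate_succ_apply, Function.iterate_succ_apply, h]
  -- divisibility along the fundamental sequence
  have hdvd : ∀ k l : ℕ, ∃ m, d k = iterAdd m (d (k + l)) := by
    intro k l
    induction l with
    | zero => exact ⟨0, rfl⟩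
    | succ j ih =>
        obtain ⟨m, hm⟩ := ih
        refine ⟨m * n (k + j) + m + n (k + j), ?_⟩
        rw [hm, (hn (k + j)).2, iterAdd_iterAdd]
        have : k + j + 1 = k + (j + 1) := by omega
        rw [this]
  have hdvd' : ∀ k j : ℕ, k ≤ j → ∃ m, d k = iterAdd m (d j) := by
    intro k j hkj
    obtain ⟨l, rfl⟩ := Nat.exists_eq_add_of_le hkj
    exact hdvd k l
  -- every map d k is injective
  have hinj : ∀ k, Function.Injective (Φ (d k)) := by
    by_contra hcon
    push_neg at hcon
    obtain ⟨K, hK⟩ := hcon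
    have hninj : ∀ l : ℕ, ∃ x y : X, Φ (d (K + l)) x = Φ (d (K + l)) y ∧ x ≠ y := by
      intro l
      by_contra h
      push_neg at h
      apply hK
      obtain ⟨m, hm⟩ := hdvd K l
      intro x y hxy
      rw [hm, hiter] at hxy
      exact Function.Injective.iterate (fun a b hab => h a b hab) (m + 1) hxy
    choose u v huv hne using hninj
    have hΦK : ∀ l, Φ (d K) (u l) = Φ (d K) (v l) := by
      intro l
      obtain ⟨m, hm⟩ := hdvd K l
      rw [hm]
      exact hkey m _ _ _ (huv l)
    -- Lebesgue number for local injectivity of Φ (d K)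
    choose U hUmem hUinj using (hφ (d K)).2.2
    obtain ⟨δ, hδpos, hδ⟩ := lebesgue_number_lemma_of_metric (isCompact_univ (X := X))
      (fun x => isOpen_interior (s := U x))
      (fun x _ => Set.mem_iUnion.2 ⟨x, mem_interior_iff_mem_nhds.2 (hUmem x)⟩)
    have hsepδ : ∀ l, δ ≤ dist (u l) (v l) := by
      intro l
      by_contra h
      push_neg at h
      apply hne l
      obtain ⟨i, hi⟩ := hδ (u l) trivial
      have h1 : u l ∈ interior (U i) := hi (Metric.mem_ball_self hδpos)
      have h2 : v l ∈ interior (U i) := hi (by rw [Metric.mem_ball, dist_comm]; exact h)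
      exact ((hUinj i).mono interior_subset) h1 h2 (hΦK l)
    -- pass to a convergent subsequence of the pairs
    obtain ⟨a, -, σ, hσ, hconv⟩ := (isCompact_univ (X := X × X)).tendsto_subseq
      (x := fun l => (u l, v l)) (fun l => Set.mem_univ _)
    have hu : Filter.Tendsto (fun m => u (σ m)) Filter.atTop (nhds a.1) :=
      (continuous_fst.tendsto a).comp hconv
    have hv : Filter.Tendsto (fun m => v (σ m)) Filter.atTop (nhds a.2) :=
      (continuous_snd.tendsto a).comp hconv
    have hane : a.1 ≠ a.2 := by
      have hd : Filter.Tendsto (fun m => dist (u (σ m)) (v (σ m))) Filter.atTop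
          (nhds (dist a.1 a.2)) := hu.dist hv
      have hge : δ ≤ dist a.1 a.2 :=
        ge_of_tendsto hd (Filter.Eventually.of_forall fun m => hsepδ (σ m))
      intro h
      rw [h, dist_self] at hge
      linarith
    have heq : ∀ k, Φ (d k) a.1 = Φ (d k) a.2 := by
      intro k
      have h1 : Filter.Tendsto (fun m => Φ (d k) (u (σ m))) Filter.atTop
          (nhds (Φ (d k) a.1)) := ((hφ (d k)).1.tendsto _).comp hu
      have h2 : Filter.Tendsto (fun m => Φ (d k) (v (σ m))) Filter.atTop
          (nhds (Φ (d k) a.2)) := ((hφ (d k)).1.tendsto _).comp hv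
      refine tendsto_nhds_unique (h1.congr' ?_) h2
      filter_upwards [Filter.eventually_ge_atTop k] with m hm
      have hkK : k ≤ K + σ m := le_trans (le_trans hm (hσ.le_apply)) (Nat.le_add_left _ _)
      obtain ⟨m', hm'⟩ := hdvd' k (K + σ m) hkK
      rw [hm']
      exact hkey m' _ _ _ (huv (σ m))
    obtain ⟨p, hp⟩ := hsep a.1 a.2 hane
    obtain ⟨k, m, rfl⟩ := hgen p
    exact hp (hkey m (d k) a.1 a.2 (heq k))
  -- conclude
  intro p
  obtain ⟨k, m, hp⟩ := hgen p
  have hinjp : Function.Injective (Φ p) := by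
    rw [hp, hiter]
    exact (hinj k).iterate (m + 1)
  have hbij : Function.Bijective (Φ p) := ⟨hinjp, (hφ p).2.1⟩
  have hc : Continuous (⇑(Equiv.ofBijective (Φ p) hbij)) := (hφ p).1
  exact ⟨hc.homeoOfEquivCompactToT2, rfl⟩
end
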